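/- (Large-deviation part in the proof of Lemma 4.4.) Let C > 0 be a constant. On a probability space carrying a filtration (F_t)_{t≥0} and a standard Brownian motion W with respect to (F_t), let n, p ∈ ℕ and let Z^1, …, Z^p be (F_t)-adapted real-valued processes on [0, 1] with sup_{t∈[0,1]} max_{1≤i≤p} |Z_t^i| ≤ C. Set Δ := 1/n, t_k := k/n, U_k := (W_{t_k} − W_{t_{k−1}})² − Δ, and for η > 0 let G_n^i := (1/(nΔ)) Σ_{k=1}^n Z_{t_{k−1}}^i U_k 1_{|U_k| > η}. Then for every γ > 0 and η > 0, P( max_{1≤i≤p} |G_n^i| ≥ γ ) ≤ 2CΔ/(γη). -/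

import Mathlib

open MeasureTheory ProbabilityTheory Filter

/-- `W` is a standard Brownian motion with respect to the filtration `F` (of sub-σ-algebras of
the ambient σ-algebra) under the probability measure `P`: `F` is a filtration, `W` is adapted,
`W 0 = 0`, `W` has continuous paths, and for `0 ≤ s ≤ t` the increment `W t - W s` is
independent of `F s` with distribution `N(0, t - s)`. -/
def IsStdBM {Ω : Type*} [m : MeasurableSpace Ω] (P : Measure Ω)
    (F : ℝ → MeasurableSpace Ω) (W : ℝ → Ω → ℝ) : Prop :=
  (∀ t, F t ≤ m) ∧ (∀ s t : ℝ, s ≤ t → F s ≤ F t) ∧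
  (∀ t, @Measurable Ω ℝ (F t) _ (W t)) ∧
  (∀ ω, W 0 ω = 0) ∧
  (∀ ω, Continuous fun t => W t ω) ∧
  (∀ s t : ℝ, 0 ≤ s → s ≤ t →
    Indep (MeasurableSpace.comap (fun ω => W t ω - W s ω) inferInstance) (F s) P ∧
    Measure.map (fun ω => W t ω - W s ω) P = gaussianReal 0 (t - s).toNNReal)

open MeasureTheory ProbabilityTheory Filter Real Set
open scoped NNReal ENNReal

lemma int2 {b : ℝ} (hb : 0 < b) :
    ∫ x : ℝ, x ^ 2 * Real.exp (-b * x ^ 2) = Real.sqrt π * b ^ (-(3/2) : ℝ) / 2 := by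
  have h1 : (fun x : ℝ => x ^ 2 * Real.exp (-b * x ^ 2))
      = fun x : ℝ => |x| ^ 2 * Real.exp (-b * |x| ^ 2) := by
    ext x; rw [sq_abs]
  rw [h1, integral_comp_abs (f := fun x : ℝ => x ^ 2 * Real.exp (-b * x ^ 2))]
  have h2 : ∫ x in Ioi (0:ℝ), x ^ 2 * Real.exp (-b * x ^ 2)
      = b ^ (-(2 + 1) / 2 : ℝ) * (1 / 2) * Real.Gamma ((2 + 1) / 2) := by
    have := integral_rpow_mul_exp_neg_mul_rpow (p := 2) (q := 2) (b := b)
      (by norm_num) (by norm_num) hb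
    rw [← this]
    refine setIntegral_congr_fun measurableSet_Ioi (fun x hx => ?_)
    rw [← Real.rpow_natCast x 2]
    norm_num
  rw [h2]
  have h3 : Real.Gamma ((2 + 1) / 2) = Real.sqrt π / 2 := by
    have : ((2:ℝ) + 1) / 2 = 1/2 + 1 := by norm_num
    rw [this, Real.Gamma_add_one (by norm_num), Real.Gamma_one_half_eq]
    ring
  rw [h3]
  norm_num
  ring

lemma int4 {b : ℝ} (hb : 0 < b) :
    ∫ x : ℝ, x ^ 4 * Real.exp (-b * x ^ 2) = 3 * Real.sqrt π * b ^ (-(5/2) : ℝ) / 4 := by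
  have h1 : (fun x : ℝ => x ^ 4 * Real.exp (-b * x ^ 2))
      = fun x : ℝ => |x| ^ 4 * Real.exp (-b * |x| ^ 2) := by
    ext x; rw [sq_abs, pow_abs, abs_of_nonneg (by positivity : (0:ℝ) ≤ x ^ 4)]
  rw [h1, integral_comp_abs (f := fun x : ℝ => x ^ 4 * Real.exp (-b * x ^ 2))]
  have h2 : ∫ x in Ioi (0:ℝ), x ^ 4 * Real.exp (-b * x ^ 2)
      = b ^ (-(4 + 1) / 2 : ℝ) * (1 / 2) * Real.Gamma ((4 + 1) / 2) := by
    have := integral_rpow_mul_exp_neg_mul_rpow (p := 2) (q := 4) (b := b)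
      (by norm_num) (by norm_num) hb
    rw [← this]
    refine setIntegral_congr_fun measurableSet_Ioi (fun x hx => ?_)
    rw [← Real.rpow_natCast x 4]
    norm_num
  rw [h2]
  have h3 : Real.Gamma ((4 + 1) / 2) = 3 * Real.sqrt π / 4 := by
    have e1 : ((4:ℝ) + 1) / 2 = 3/2 + 1 := by norm_num
    have e2 : (3:ℝ)/2 = 1/2 + 1 := by norm_num
    rw [e1, Real.Gamma_add_one (by norm_num), e2, Real.Gamma_add_one (by norm_num),
      Real.Gamma_one_half_eq]
    ring
  rw [h3]
  norm_num
  ring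

lemma intpow {b : ℝ} (hb : 0 < b) (k : ℕ) :
    Integrable (fun x : ℝ => x ^ k * Real.exp (-b * x ^ 2)) := by
  have h := integrable_rpow_mul_exp_neg_mul_sq hb (s := (k : ℝ))
    (by exact_mod_cast neg_one_lt_zero.trans_le (Nat.cast_nonneg k))
  simpa [Real.rpow_natCast] using h

lemma gauss_moment (v : ℝ≥0) (hv : v ≠ 0) :
    ∫⁻ x, ENNReal.ofReal ((x ^ 2 - (v : ℝ)) ^ 2) ∂(gaussianReal 0 v)
      = ENNReal.ofReal (2 * (v : ℝ) ^ 2) := by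
  have hv' : (0 : ℝ) < v := lt_of_le_of_ne v.coe_nonneg (by exact_mod_cast hv.symm)
  set b : ℝ := (2 * (v : ℝ))⁻¹ with hbdef
  have hb : 0 < b := by positivity
  have hfmeas : Measurable fun x : ℝ => ENNReal.ofReal ((x ^ 2 - (v : ℝ)) ^ 2) := by
    exact (((measurable_id.pow_const 2).sub_const _).pow_const 2).ennreal_ofReal
  rw [gaussianReal_of_var_ne_zero 0 hv,
    lintegral_withDensity_eq_lintegral_mul _ (measurable_gaussianPDF 0 v) hfmeas]
  have heq : (gaussianPDF 0 v * fun x => ENNReal.ofReal ((x ^ 2 - (v : ℝ)) ^ 2))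
      = fun x => ENNReal.ofReal (gaussianPDFReal 0 v x * (x ^ 2 - (v : ℝ)) ^ 2) := by
    ext x
    rw [Pi.mul_apply, gaussianPDF, ← ENNReal.ofReal_mul (gaussianPDFReal_nonneg 0 v x)]
  rw [heq]
  set c : ℝ := (Real.sqrt (2 * Real.pi * v))⁻¹ with hcdef
  have hpdf : ∀ x : ℝ, gaussianPDFReal 0 v x = c * Real.exp (-b * x ^ 2) := by
    intro x
    rw [gaussianPDFReal, sub_zero, hbdef]
    congr 1
    field_simp
  have hfun : (fun x : ℝ => gaussianPDFReal 0 v x * (x ^ 2 - (v : ℝ)) ^ 2)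
      = fun x => c * (x ^ 4 * Real.exp (-b * x ^ 2))
          - 2 * (v : ℝ) * c * (x ^ 2 * Real.exp (-b * x ^ 2))
          + (v : ℝ) ^ 2 * c * (x ^ 0 * Real.exp (-b * x ^ 2)) := by
    ext x
    rw [hpdf x]
    ring
  have i4 : Integrable (fun x : ℝ => c * (x ^ 4 * Real.exp (-b * x ^ 2))) :=
    (intpow hb 4).const_mul _
  have i2 : Integrable (fun x : ℝ => 2 * (v : ℝ) * c * (x ^ 2 * Real.exp (-b * x ^ 2))) :=
    (intpow hb 2).const_mul _
  have i0 : Integrable (fun x : ℝ => (v : ℝ) ^ 2 * c * (x ^ 0 * Real.exp (-b * x ^ 2))) :=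
    (intpow hb 0).const_mul _
  have hint : Integrable (fun x : ℝ => gaussianPDFReal 0 v x * (x ^ 2 - (v : ℝ)) ^ 2) := by
    rw [hfun]; exact (i4.sub i2).add i0
  rw [← ofReal_integral_eq_lintegral_ofReal hint
    (Filter.Eventually.of_forall fun x =>
      mul_nonneg (gaussianPDFReal_nonneg 0 v x) (sq_nonneg _))]
  congr 1
  have i42 : Integrable (fun x : ℝ => c * (x ^ 4 * Real.exp (-b * x ^ 2))
      - 2 * (v : ℝ) * c * (x ^ 2 * Real.exp (-b * x ^ 2))) := i4.sub i2
  rw [hfun, integral_add i42 i0, integral_sub i4 i2,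
    integral_const_mul, integral_const_mul, integral_const_mul, int4 hb, int2 hb]
  have h0 : ∫ x : ℝ, x ^ 0 * Real.exp (-b * x ^ 2) = Real.sqrt (Real.pi / b) := by
    simp_rw [pow_zero, one_mul]
    exact integral_gaussian b
  rw [h0]
  -- algebra
  have h2v : (0 : ℝ) < 2 * (v : ℝ) := by positivity
  have hbky : ∀ y : ℝ, b ^ (-y) = (2 * (v : ℝ)) ^ y := by
    intro y
    rw [hbdef, Real.inv_rpow h2v.le, ← Real.rpow_neg h2v.le, neg_neg]
  set s : ℝ := Real.sqrt (2 * (v : ℝ)) with hsdef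
  have hs : 0 < s := Real.sqrt_pos.mpr h2v
  have e52 : b ^ (-(5/2) : ℝ) = (2 * (v : ℝ)) ^ 2 * s := by
    rw [show (-(5/2) : ℝ) = -(((2:ℕ):ℝ) + 1/2) by norm_num, hbky, Real.rpow_add h2v,
      Real.rpow_natCast, hsdef, Real.sqrt_eq_rpow]
  have e32 : b ^ (-(3/2) : ℝ) = (2 * (v : ℝ)) * s := by
    rw [show (-(3/2) : ℝ) = -(1 + 1/2) by norm_num, hbky, Real.rpow_add h2v,
      Real.rpow_one, hsdef, Real.sqrt_eq_rpow]
  have e12 : Real.sqrt (Real.pi / b) = Real.sqrt Real.pi * s := by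
    rw [hbdef, div_eq_mul_inv, inv_inv, hsdef, ← Real.sqrt_mul Real.pi_pos.le]
  have ec : c = (Real.sqrt Real.pi * s)⁻¹ := by
    rw [hcdef, hsdef, show 2 * Real.pi * (v : ℝ) = Real.pi * (2 * (v : ℝ)) by ring,
      Real.sqrt_mul Real.pi_pos.le]
  rw [e52, e32, e12, ec]
  have hπ : (0 : ℝ) < Real.sqrt Real.pi := Real.sqrt_pos.mpr Real.pi_pos
  field_simp
  ring

private lemma large_deviation_aux (C : ℝ) (hC : 0 < C)
    {Ω : Type*} [m : MeasurableSpace Ω] (P : Measure Ω) [IsProbabilityMeasure P]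
    (F : ℝ → MeasurableSpace Ω) (W : ℝ → Ω → ℝ)
    (hW1 : ∀ t, F t ≤ m) (hW3 : ∀ t, @Measurable Ω ℝ (F t) _ (W t))
    (hWmap : ∀ s t : ℝ, 0 ≤ s → s ≤ t →
      Measure.map (fun ω => W t ω - W s ω) P = gaussianReal 0 (t - s).toNNReal)
    (n p : ℕ) (hn : 0 < n) (hp : 0 < p)
    (Z : Fin p → ℝ → Ω → ℝ)
    (hZbd : ∀ i, ∀ t ∈ Set.Icc (0 : ℝ) 1, ∀ ω, |Z i t ω| ≤ C)
    (γ η : ℝ) (hγ : 0 < γ) (hη : 0 < η) :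
    P {ω | γ ≤ ⨆ i : Fin p, |(1 / ((n : ℝ) * (1 / n))) * ∑ k : Fin n,
        Z i ((k : ℕ) / n) ω *
          (if η < |(W (((k : ℕ) + 1) / n) ω - W ((k : ℕ) / n) ω) ^ 2 - 1 / n|
            then (W (((k : ℕ) + 1) / n) ω - W ((k : ℕ) / n) ω) ^ 2 - 1 / n
            else 0)|} ≤
      ENNReal.ofReal (2 * C * (1 / n) / (γ * η)) := by
  have hn' : ((n : ℝ)) ≠ 0 := Nat.cast_ne_zero.mpr hn.ne'
  have hnpos : (0 : ℝ) < n := Nat.cast_pos.mpr hn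
  haveI : Nonempty (Fin p) := Fin.pos_iff_nonempty.mp hp
  have hWm : ∀ t, Measurable (W t) := fun t => (hW3 t).mono (hW1 t) le_rfl
  set U : Fin n → Ω → ℝ := fun k ω =>
    (W (((k : ℕ) + 1) / n) ω - W ((k : ℕ) / n) ω) ^ 2 - 1 / n with hUdef
  have hUm : ∀ k, Measurable (U k) := fun k =>
    (((hWm _).sub (hWm _)).pow_const 2).sub_const _
  -- pointwise bound
  have hpt : ∀ ω, (⨆ i : Fin p, |(1 / ((n : ℝ) * (1 / n))) * ∑ k : Fin n,
      Z i ((k : ℕ) / n) ω *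
        (if η < |(W (((k : ℕ) + 1) / n) ω - W ((k : ℕ) / n) ω) ^ 2 - 1 / n|
          then (W (((k : ℕ) + 1) / n) ω - W ((k : ℕ) / n) ω) ^ 2 - 1 / n
          else 0)|) ≤ (C / η) * ∑ k : Fin n, (U k ω) ^ 2 := by
    intro ω
    refine ciSup_le fun i => ?_
    have hone : (1 : ℝ) / ((n : ℝ) * (1 / n)) = 1 := by field_simp
    rw [hone, one_mul]
    calc |∑ k : Fin n, Z i ((k : ℕ) / n) ω *
          (if η < |(W (((k : ℕ) + 1) / n) ω - W ((k : ℕ) / n) ω) ^ 2 - 1 / n|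
            then (W (((k : ℕ) + 1) / n) ω - W ((k : ℕ) / n) ω) ^ 2 - 1 / n
            else 0)|
        ≤ ∑ k : Fin n, |Z i ((k : ℕ) / n) ω *
          (if η < |(W (((k : ℕ) + 1) / n) ω - W ((k : ℕ) / n) ω) ^ 2 - 1 / n|
            then (W (((k : ℕ) + 1) / n) ω - W ((k : ℕ) / n) ω) ^ 2 - 1 / n
            else 0)| := Finset.abs_sum_le_sum_abs _ _
      _ ≤ ∑ k : Fin n, C * ((U k ω) ^ 2 / η) := by
          refine Finset.sum_le_sum fun k _ => ?_
          rw [abs_mul]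
          have htmem : ((k : ℕ) : ℝ) / n ∈ Set.Icc (0 : ℝ) 1 := by
            constructor
            · positivity
            · rw [div_le_one hnpos]
              exact_mod_cast (k.isLt).le
          have hZ : |Z i ((k : ℕ) / n) ω| ≤ C := hZbd i _ htmem ω
          have hI : |(if η < |(W (((k : ℕ) + 1) / n) ω - W ((k : ℕ) / n) ω) ^ 2 - 1 / n|
              then (W (((k : ℕ) + 1) / n) ω - W ((k : ℕ) / n) ω) ^ 2 - 1 / n
              else 0)| ≤
              ((W (((k : ℕ) + 1) / n) ω - W ((k : ℕ) / n) ω) ^ 2 - 1 / n) ^ 2 / η := by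
            split_ifs with h
            · rw [le_div_iff₀ hη]
              calc |(W (((k : ℕ) + 1) / n) ω - W ((k : ℕ) / n) ω) ^ 2 - 1 / n| * η
                  ≤ |(W (((k : ℕ) + 1) / n) ω - W ((k : ℕ) / n) ω) ^ 2 - 1 / n| *
                    |(W (((k : ℕ) + 1) / n) ω - W ((k : ℕ) / n) ω) ^ 2 - 1 / n| :=
                    mul_le_mul_of_nonneg_left h.le (abs_nonneg _)
                _ = ((W (((k : ℕ) + 1) / n) ω - W ((k : ℕ) / n) ω) ^ 2 - 1 / n) ^ 2 := by
                    rw [abs_mul_abs_self, ← sq]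
            · simp only [abs_zero]
              positivity
          exact mul_le_mul hZ hI (abs_nonneg _) hC.le
      _ = (C / η) * ∑ k : Fin n, (U k ω) ^ 2 := by
          rw [Finset.mul_sum]
          exact Finset.sum_congr rfl fun k _ => by ring
  -- per-increment second moment
  have hUk : ∀ k : Fin n, ∫⁻ ω, ENNReal.ofReal ((U k ω) ^ 2) ∂P
      = ENNReal.ofReal (2 * (1 / (n : ℝ)) ^ 2) := by
    intro k
    set v : ℝ≥0 := ((1 : ℝ) / n).toNNReal with hvdef
    have hvc : (v : ℝ) = 1 / n := Real.coe_toNNReal _ (by positivity)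
    have hv0 : v ≠ 0 := (Real.toNNReal_pos.mpr (by positivity)).ne'
    have h0 : (0 : ℝ) ≤ ((k : ℕ) : ℝ) / n := by positivity
    have hle : ((k : ℕ) : ℝ) / n ≤ (((k : ℕ) : ℝ) + 1) / n := by gcongr; linarith
    have hmap := hWmap (((k : ℕ) : ℝ) / n) ((((k : ℕ) : ℝ) + 1) / n) h0 hle
    have hdiff : ((((k : ℕ) : ℝ) + 1) / n - ((k : ℕ) : ℝ) / n) = 1 / n := by
      field_simp
      ring
    rw [hdiff] at hmap
    have hfmeas : Measurable fun x : ℝ => ENNReal.ofReal ((x ^ 2 - (v : ℝ)) ^ 2) :=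
      (((measurable_id.pow_const 2).sub_const _).pow_const 2).ennreal_ofReal
    calc ∫⁻ ω, ENNReal.ofReal ((U k ω) ^ 2) ∂P
        = ∫⁻ ω, ENNReal.ofReal
            (((W ((((k : ℕ) : ℝ) + 1) / n) ω - W (((k : ℕ) : ℝ) / n) ω) ^ 2 - (v : ℝ)) ^ 2)
            ∂P := by
          refine lintegral_congr fun ω => ?_
          rw [hvc]
      _ = ∫⁻ x, ENNReal.ofReal ((x ^ 2 - (v : ℝ)) ^ 2)
            ∂(Measure.map (fun ω => W ((((k : ℕ) : ℝ) + 1) / n) ω - W (((k : ℕ) : ℝ) / n) ω) P) :=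
          (lintegral_map hfmeas ((hWm _).sub (hWm _))).symm
      _ = ∫⁻ x, ENNReal.ofReal ((x ^ 2 - (v : ℝ)) ^ 2) ∂(gaussianReal 0 v) := by
          rw [hmap]
      _ = ENNReal.ofReal (2 * (v : ℝ) ^ 2) := gauss_moment v hv0
      _ = ENNReal.ofReal (2 * (1 / (n : ℝ)) ^ 2) := by rw [hvc]
  -- Markov
  set g : Ω → ℝ≥0∞ := fun ω => ENNReal.ofReal ((C / η) * ∑ k : Fin n, (U k ω) ^ 2) with hgdef
  have hgm : Measurable g :=
    (measurable_const.mul (Finset.measurable_sum _ fun k _ => (hUm k).pow_const 2)).ennreal_ofReal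
  have hsub : {ω | γ ≤ ⨆ i : Fin p, |(1 / ((n : ℝ) * (1 / n))) * ∑ k : Fin n,
        Z i ((k : ℕ) / n) ω *
          (if η < |(W (((k : ℕ) + 1) / n) ω - W ((k : ℕ) / n) ω) ^ 2 - 1 / n|
            then (W (((k : ℕ) + 1) / n) ω - W ((k : ℕ) / n) ω) ^ 2 - 1 / n
            else 0)|} ⊆ {ω | ENNReal.ofReal γ ≤ g ω} :=
    fun ω hω => ENNReal.ofReal_le_ofReal (le_trans hω (hpt ω))
  refine (measure_mono hsub).trans ?_
  refine (meas_ge_le_lintegral_div hgm.aemeasurable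
    (ENNReal.ofReal_pos.mpr hγ).ne' ENNReal.ofReal_ne_top).trans ?_
  have hCη : (0 : ℝ) ≤ C / η := (div_pos hC hη).le
  have hsum : ∫⁻ ω, g ω ∂P
      = ENNReal.ofReal (C / η) * ((n : ℝ≥0∞) * ENNReal.ofReal (2 * (1 / (n : ℝ)) ^ 2)) := by
    calc ∫⁻ ω, g ω ∂P
        = ∫⁻ ω, ENNReal.ofReal (C / η) * ∑ k : Fin n, ENNReal.ofReal ((U k ω) ^ 2) ∂P := by
          refine lintegral_congr fun ω => ?_
          show ENNReal.ofReal (C / η * ∑ k : Fin n, U k ω ^ 2) = _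
          rw [ENNReal.ofReal_mul hCη,
            ENNReal.ofReal_sum_of_nonneg (fun k _ => sq_nonneg _)]
      _ = ENNReal.ofReal (C / η) * ∫⁻ ω, ∑ k : Fin n, ENNReal.ofReal ((U k ω) ^ 2) ∂P :=
          lintegral_const_mul _ (Finset.measurable_sum _
            fun k _ => ((hUm k).pow_const 2).ennreal_ofReal)
      _ = ENNReal.ofReal (C / η) * ∑ k : Fin n, ∫⁻ ω, ENNReal.ofReal ((U k ω) ^ 2) ∂P := by
          rw [lintegral_finset_sum _ fun k _ => ((hUm k).pow_const 2).ennreal_ofReal]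
      _ = ENNReal.ofReal (C / η) * ∑ _k : Fin n, ENNReal.ofReal (2 * (1 / (n : ℝ)) ^ 2) := by
          rw [Finset.sum_congr rfl fun k _ => hUk k]
      _ = ENNReal.ofReal (C / η) * ((n : ℝ≥0∞) * ENNReal.ofReal (2 * (1 / (n : ℝ)) ^ 2)) := by
          rw [Finset.sum_const, Finset.card_univ, Fintype.card_fin, nsmul_eq_mul]
  rw [hsum, ← ENNReal.ofReal_natCast n, ← ENNReal.ofReal_mul (by positivity),
    ← ENNReal.ofReal_mul hCη, ← ENNReal.ofReal_div_of_pos hγ]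
  refine ENNReal.ofReal_le_ofReal (le_of_eq ?_)
  field_simp

/-- Large-deviation part in the proof of Lemma 4.4: with `Δ = 1/n`, `t_k = k/n`,
`U_k = (W_{t_k} - W_{t_{k-1}})² - Δ` and
`G_n^i = (1/(nΔ)) Σ_k Z^i_{t_{k-1}} U_k 1_{|U_k| > η}`,
one has `P(max_{1≤i≤p} |G_n^i| ≥ γ) ≤ 2CΔ/(γη)` for all `γ, η > 0`. -/
theorem large_deviation_part (C : ℝ) (hC : 0 < C)
    {Ω : Type*} [m : MeasurableSpace Ω] (P : Measure Ω) [IsProbabilityMeasure P]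
    (F : ℝ → MeasurableSpace Ω) (W : ℝ → Ω → ℝ) (hW : IsStdBM P F W)
    (n p : ℕ) (hn : 0 < n) (hp : 0 < p)
    (Z : Fin p → ℝ → Ω → ℝ)
    (hZad : ∀ i, ∀ t ∈ Set.Icc (0 : ℝ) 1, @Measurable _ _ (F t) _ (Z i t))
    (hZbd : ∀ i, ∀ t ∈ Set.Icc (0 : ℝ) 1, ∀ ω, |Z i t ω| ≤ C)
    (γ η : ℝ) (hγ : 0 < γ) (hη : 0 < η) :
    P {ω | γ ≤ ⨆ i : Fin p, |(1 / ((n : ℝ) * (1 / n))) * ∑ k : Fin n,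
        Z i ((k : ℕ) / n) ω *
          (if η < |(W (((k : ℕ) + 1) / n) ω - W ((k : ℕ) / n) ω) ^ 2 - 1 / n|
            then (W (((k : ℕ) + 1) / n) ω - W ((k : ℕ) / n) ω) ^ 2 - 1 / n
            else 0)|} ≤
      ENNReal.ofReal (2 * C * (1 / n) / (γ * η)) := by
  obtain ⟨h1, _, h3, _, _, h6⟩ := hW
  exact large_deviation_aux C hC P F W h1 h3 (fun s t hs hst => (h6 s t hs hst).2)
    n p hn hp Z hZbd γ η hγ hη
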